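/- arXiv:2209.10615 — 2 statements merged into one kernel-verified Lean document; each statement's English description precedes it below -/
import Mathlib

section
/- Let p be a positive natural number, E := EuclideanSpace ℝ (Fin p), and let (Ω, 𝒜, μ) be a probability space with a filtration (ℱ_k)_{k∈ℕ}. Let L, σ, c, b > 0, let f_c : E → ℝ be differentiable with L-Lipschitz gradient and bounded below by f*_c ∈ ℝ, let f : E → ℝ be differentiable, and assume the Gaussian-smoothing relation ‖∇f(θ)‖² ≤ 2·‖∇f_c(θ)‖² + (c²/2)·L·(p+3)³ for all θ ∈ E. Fix K ≥ 1 and a constant 0 < α ≤ 1/(4·L), and set α_k := α/√K for every k. Suppose random sequences θ_k, r_k, b_k : Ω → E satisfy: θ_0 deterministic; θ_{k+1} = θ_k − α_k • (∇f_c(θ_k) + r_k + b_k); θ_k and b_k are ℱ_k-measurable; r_k is ℱ_{k+1}-measurable, integrable with square-integrable norm; E[r_k | ℱ_k] = 0 a.s.; E[‖r_k‖² | ℱ_k] ≤ σ² a.s.; ‖b_k‖ ≤ 2·b/c a.s.; and each θ_k has square-integrable norm with f_c(θ_k) integrable. Then min_{0 ≤ k < K} E[‖∇f(θ_k)‖²]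 ≤ 8·(f_c(θ_0) − f*_c)/(α·√K) + 4·L·α·(σ² + 8·b²/c²)/√K + 16·b²/c² + (c²/2)·L·(p+3)³. -/
open MeasureTheory InnerProductSpace

section Aux

variable {E' : Type*} [NormedAddCommGroup E'] [InnerProductSpace ℝ E'] [CompleteSpace E']

lemma descent_lemma_aux {fc : E' → ℝ} {L : ℝ} (hL : 0 < L)
    (hfc : Differentiable ℝ fc)
    (hLip : ∀ x y, ‖gradient fc x - gradient fc y‖ ≤ L * ‖x - y‖)
    (x v : E') :
    fc (x + v) ≤ fc x + ⟪gradient fc x, v⟫_ℝ + L / 2 * ‖v‖ ^ 2 := by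
  have hgc : Continuous (fun y => gradient fc y) := by
    have : LipschitzWith (Real.toNNReal L) (fun y => gradient fc y) := by
      apply LipschitzWith.of_dist_le_mul
      intro a bb
      simpa [dist_eq_norm, Real.coe_toNNReal L hL.le] using hLip a bb
    exact this.continuous
  have hderiv : ∀ t : ℝ, HasDerivAt (fun t : ℝ => fc (x + t • v))
      (⟪gradient fc (x + t • v), v⟫_ℝ) t := by
    intro t
    have hg : HasFDerivAt fc (toDual ℝ E' (gradient fc (x + t • v))) (x + t • v) :=
      (hfc _).hasGradientAt.hasFDerivAt
    have hline : HasDerivAt (fun t : ℝ => x + t • v) v t := by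
      simpa using ((hasDerivAt_id t).smul_const v).const_add x
    have := hg.comp_hasDerivAt t hline
    simpa [toDual_apply_apply, Function.comp_def] using this
  have hcont : Continuous (fun t : ℝ => ⟪gradient fc (x + t • v), v⟫_ℝ) := by
    exact Continuous.inner (hgc.comp (by continuity)) continuous_const
  have hFTC : fc (x + v) - fc x
      = ∫ t in (0:ℝ)..1, ⟪gradient fc (x + t • v), v⟫_ℝ := by
    have := intervalIntegral.integral_eq_sub_of_hasDerivAt
      (f := fun t : ℝ => fc (x + t • v)) (a := 0) (b := 1)
      (fun t _ => hderiv t) (hcont.intervalIntegrable 0 1)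
    simpa using this.symm
  have hmono : ∫ t in (0:ℝ)..1, ⟪gradient fc (x + t • v), v⟫_ℝ
      ≤ ∫ t in (0:ℝ)..1, (⟪gradient fc x, v⟫_ℝ + L * t * ‖v‖ ^ 2) := by
    apply intervalIntegral.integral_mono_on (by norm_num)
      (hcont.intervalIntegrable 0 1)
      (by apply Continuous.intervalIntegrable; fun_prop)
    intro t ht
    have key : ⟪gradient fc (x + t • v) - gradient fc x, v⟫_ℝ ≤ L * t * ‖v‖ ^ 2 := by
      calc ⟪gradient fc (x + t • v) - gradient fc x, v⟫_ℝ
          ≤ ‖gradient fc (x + t • v) - gradient fc x‖ * ‖v‖ := real_inner_le_norm _ _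
        _ ≤ (L * ‖(x + t • v) - x‖) * ‖v‖ := by
            apply mul_le_mul_of_nonneg_right (hLip _ _) (norm_nonneg _)
        _ = L * t * ‖v‖ ^ 2 := by
            rw [add_sub_cancel_left, norm_smul]
            simp [Real.norm_eq_abs, abs_of_nonneg ht.1]
            ring
    have := inner_sub_left (𝕜 := ℝ) (gradient fc (x + t • v)) (gradient fc x) v
    linarith [key, this.symm.le, this.le]
  have hint : ∫ t in (0:ℝ)..1, (⟪gradient fc x, v⟫_ℝ + L * t * ‖v‖ ^ 2)
      = ⟪gradient fc x, v⟫_ℝ + L / 2 * ‖v‖ ^ 2 := by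
    rw [intervalIntegral.integral_add (by apply Continuous.intervalIntegrable; fun_prop)
      (by apply Continuous.intervalIntegrable; fun_prop)]
    have h2 : ∫ t in (0:ℝ)..1, L * t * ‖v‖ ^ 2 = L / 2 * ‖v‖ ^ 2 := by
      rw [show (fun t : ℝ => L * t * ‖v‖ ^ 2) = fun t : ℝ => (L * ‖v‖ ^ 2) * t from
        funext fun t => by ring]
      rw [intervalIntegral.integral_const_mul, integral_id]
      ring
    rw [h2]
    simp
  linarith [hFTC, hmono, hint.le, hint.ge]

variable {α : Type*} {m m0 : MeasurableSpace α} {μ : Measure α}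

lemma integrable_inner_of_sq {X R : α → E'}
    (hXm : AEStronglyMeasurable X μ) (hRm : AEStronglyMeasurable R μ)
    (hXsq : Integrable (fun ω => ‖X ω‖ ^ 2) μ)
    (hRsq : Integrable (fun ω => ‖R ω‖ ^ 2) μ) :
    Integrable (fun ω => ⟪X ω, R ω⟫_ℝ) μ := by
  apply Integrable.mono' ((hXsq.add hRsq).div_const 2) (hXm.inner hRm)
  filter_upwards with ω
  have h := abs_real_inner_le_norm (X ω) (R ω)
  have h2 : ‖X ω‖ * ‖R ω‖ ≤ (‖X ω‖ ^ 2 + ‖R ω‖ ^ 2) / 2 := by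
    nlinarith [sq_nonneg (‖X ω‖ - ‖R ω‖)]
  calc ‖⟪X ω, R ω⟫_ℝ‖ = |⟪X ω, R ω⟫_ℝ| := rfl
    _ ≤ (‖X ω‖ ^ 2 + ‖R ω‖ ^ 2) / 2 := h.trans h2

variable {F' : Type*} [NormedAddCommGroup F'] [NormedSpace ℝ F'] [CompleteSpace F']
variable {G' : Type*} [NormedAddCommGroup G'] [NormedSpace ℝ G'] [CompleteSpace G']

lemma condexp_clm_aux (hm : m ≤ m0) [SigmaFinite (μ.trim hm)] (T : F' →L[ℝ] G')
    {f : α → F'} (hf : Integrable f μ) :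
    μ[fun ω => T (f ω)|m] =ᵐ[μ] fun ω => T ((μ[f|m]) ω) := by
  refine (ae_eq_condExp_of_forall_setIntegral_eq hm (T.integrable_comp hf)
    (fun s _ _ => (T.integrable_comp integrable_condExp).integrableOn)
    (fun s hs hμs => ?_)
    ((T.continuous.comp_stronglyMeasurable stronglyMeasurable_condExp).aestronglyMeasurable))
    |>.symm
  rw [T.integral_comp_comm integrable_condExp.integrableOn,
    setIntegral_condExp hm hf hs, T.integral_comp_comm hf.integrableOn]

lemma abs_coord_le_norm_aux {p : ℕ} (x : EuclideanSpace ℝ (Fin p)) (i : Fin p) :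
    |x i| ≤ ‖x‖ := by
  have h : |x i| ^ 2 ≤ ‖x‖ ^ 2 := by
    rw [EuclideanSpace.norm_eq, Real.sq_sqrt (by positivity)]
    exact Finset.single_le_sum (f := fun j => |x j| ^ 2)
      (fun j _ => by positivity) (Finset.mem_univ i)
  nlinarith [abs_nonneg (x i), norm_nonneg x]

lemma integral_inner_zero_aux {p : ℕ} [IsProbabilityMeasure μ] (hm : m ≤ m0)
    {X R : α → EuclideanSpace ℝ (Fin p)}
    (hX : StronglyMeasurable[m] X)
    (hXsq : Integrable (fun ω => ‖X ω‖ ^ 2) μ)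
    (hR : Integrable R μ)
    (hRsq : Integrable (fun ω => ‖R ω‖ ^ 2) μ)
    (hcond : μ[R|m] =ᵐ[μ] 0) :
    ∫ ω, ⟪X ω, R ω⟫_ℝ ∂μ = 0 := by
  haveI : SigmaFinite (μ.trim hm) := by infer_instance
  have hint : ∀ i : Fin p, Integrable (fun ω => X ω i * R ω i) μ := by
    intro i
    apply Integrable.mono' ((hXsq.add hRsq).div_const 2)
    · exact ((((EuclideanSpace.proj i : EuclideanSpace ℝ (Fin p) →L[ℝ] ℝ).continuous.comp_stronglyMeasurable hX).mono hm).aestronglyMeasurable).mul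
        ((EuclideanSpace.proj i : EuclideanSpace ℝ (Fin p) →L[ℝ] ℝ).continuous.comp_aestronglyMeasurable hR.aestronglyMeasurable)
    · filter_upwards with ω
      have h1 := abs_coord_le_norm_aux (X ω) i
      have h2 := abs_coord_le_norm_aux (R ω) i
      have h : |X ω i * R ω i| ≤ ‖X ω‖ * ‖R ω‖ := by
        rw [abs_mul]
        exact mul_le_mul h1 h2 (abs_nonneg _) (norm_nonneg _)
      have h3 : ‖X ω‖ * ‖R ω‖ ≤ (‖X ω‖ ^ 2 + ‖R ω‖ ^ 2) / 2 := by
        nlinarith [sq_nonneg (‖X ω‖ - ‖R ω‖)]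
      calc ‖X ω i * R ω i‖ = |X ω i * R ω i| := rfl
        _ ≤ (‖X ω‖ ^ 2 + ‖R ω‖ ^ 2) / 2 := h.trans h3
  have hcomp : ∀ i : Fin p, ∫ ω, X ω i * R ω i ∂μ = 0 := by
    intro i
    have hRi : Integrable (fun ω => R ω i) μ :=
      (EuclideanSpace.proj i : EuclideanSpace ℝ (Fin p) →L[ℝ] ℝ).integrable_comp hR
    have hXi : StronglyMeasurable[m] (fun ω => X ω i) :=
      (EuclideanSpace.proj i : EuclideanSpace ℝ (Fin p) →L[ℝ] ℝ).continuous.comp_stronglyMeasurable hX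
    have hcondi : μ[fun ω => R ω i|m] =ᵐ[μ] 0 := by
      refine (condexp_clm_aux hm (EuclideanSpace.proj i) hR).trans ?_
      filter_upwards [hcond] with ω hω
      simp [hω]
    have hpull : μ[(fun ω => X ω i) * (fun ω => R ω i)|m]
        =ᵐ[μ] (fun ω => X ω i) * μ[fun ω => R ω i|m] :=
      condExp_mul_of_stronglyMeasurable_left hXi (hint i) hRi
    have heq : ∫ ω, X ω i * R ω i ∂μ
        = ∫ ω, (μ[(fun ω => X ω i) * (fun ω => R ω i)|m]) ω ∂μ :=
      (integral_condExp (f := (fun ω => X ω i) * (fun ω => R ω i)) hm).symm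
    rw [heq, integral_congr_ae (hpull.trans ?_), integral_zero]
    filter_upwards [hcondi] with ω hω
    simp [Pi.mul_apply, hω]
  have hexp : ∀ ω, ⟪X ω, R ω⟫_ℝ = ∑ i, X ω i * R ω i := by
    intro ω
    simp [PiLp.inner_apply, RCLike.inner_apply, mul_comm]
  rw [integral_congr_ae (Filter.Eventually.of_forall hexp),
    integral_finset_sum _ (fun i _ => hint i)]
  simp [hcomp]

end Aux

set_option maxHeartbeats 2000000 in
/-- fixed-budget convergence guarantee for the two-point function
approximation with biased function evaluations. With constant stepsize `α/√K`,
`0 < α ≤ 1/(4L)`, gradient-estimate bias bounded by `2b/c` a.s., conditionally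
mean-zero noise of conditional variance at most `σ²`, and the Gaussian-smoothing
relation `‖∇f‖² ≤ 2‖∇f_c‖² + (c²/2)L(p+3)³`, we get
`min_{k<K} E‖∇f(θ_k)‖² ≤ 8(f_c(θ_0) − f*_c)/(α√K) + 4Lα(σ² + 8b²/c²)/√K
  + 16b²/c² + (c²/2)L(p+3)³`. -/
theorem biased_two_point_fixed_budget
    (p : ℕ) (hp : 0 < p)
    {Ω : Type*} {mΩ : MeasurableSpace Ω} {μ : Measure Ω} [IsProbabilityMeasure μ]
    (ℱ : Filtration ℕ mΩ)
    (L σ c b : ℝ) (hL : 0 < L) (hσ : 0 < σ) (hc : 0 < c) (hb : 0 < b)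
    (fc f : EuclideanSpace ℝ (Fin p) → ℝ) (fcstar : ℝ)
    (hfc : Differentiable ℝ fc)
    (hLip : ∀ x y, ‖gradient fc x - gradient fc y‖ ≤ L * ‖x - y‖)
    (hfclb : ∀ x, fcstar ≤ fc x)
    (hf : Differentiable ℝ f)
    (hsmooth : ∀ x, ‖gradient f x‖ ^ 2
      ≤ 2 * ‖gradient fc x‖ ^ 2 + (c ^ 2 / 2) * L * ((p : ℝ) + 3) ^ 3)
    (K : ℕ) (hK : 1 ≤ K)
    (α : ℝ) (hα : 0 < α) (hαL : α ≤ 1 / (4 * L))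
    (θ r bk : ℕ → Ω → EuclideanSpace ℝ (Fin p))
    (θ0 : EuclideanSpace ℝ (Fin p)) (hθ0 : ∀ ω, θ 0 ω = θ0)
    (hrec : ∀ k ω, θ (k + 1) ω = θ k ω
      - (α / Real.sqrt K) • (gradient fc (θ k ω) + r k ω + bk k ω))
    (hθmeas : ∀ k, StronglyMeasurable[ℱ k] (θ k))
    (hbmeas : ∀ k, StronglyMeasurable[ℱ k] (bk k))
    (hrmeas : ∀ k, StronglyMeasurable[ℱ (k + 1)] (r k))
    (hrint : ∀ k, Integrable (r k) μ)
    (hrsq : ∀ k, Integrable (fun ω => ‖r k ω‖ ^ 2) μ)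
    (hrcond : ∀ k, μ[r k|ℱ k] =ᵐ[μ] 0)
    (hrvar : ∀ k, ∀ᵐ ω ∂μ, (μ[fun ω' => ‖r k ω'‖ ^ 2|ℱ k]) ω ≤ σ ^ 2)
    (hbbd : ∀ k, ∀ᵐ ω ∂μ, ‖bk k ω‖ ≤ 2 * b / c)
    (hθsq : ∀ k, Integrable (fun ω => ‖θ k ω‖ ^ 2) μ)
    (hfcint : ∀ k, Integrable (fun ω => fc (θ k ω)) μ) :
    ∃ k < K, ∫ ω, ‖gradient f (θ k ω)‖ ^ 2 ∂μ
      ≤ 8 * (fc θ0 - fcstar) / (α * Real.sqrt K)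
        + 4 * L * α * (σ ^ 2 + 8 * b ^ 2 / c ^ 2) / Real.sqrt K
        + 16 * b ^ 2 / c ^ 2 + (c ^ 2 / 2) * L * ((p : ℝ) + 3) ^ 3 := by
  classical
  -- basic facts about the stepsize
  set s : ℝ := Real.sqrt K with hsdef
  have hs1 : 1 ≤ s := by
    rw [hsdef]
    rw [show (1:ℝ) = Real.sqrt 1 from (Real.sqrt_one).symm]
    exact Real.sqrt_le_sqrt (by exact_mod_cast hK)
  have hs0 : 0 < s := lt_of_lt_of_le one_pos hs1
  have hss : s * s = (K : ℝ) := Real.mul_self_sqrt (by positivity)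
  set η : ℝ := α / s with hηdef
  have hη : 0 < η := div_pos hα hs0
  have hηα : η ≤ α := by
    rw [hηdef, div_le_iff₀ hs0]
    nlinarith
  have hLη : L * η ≤ 1 / 4 := by
    have h1 : α * (4 * L) ≤ 1 := (le_div_iff₀ (by positivity)).mp hαL
    nlinarith [mul_le_mul_of_nonneg_left hηα hL.le]
  -- continuity of the gradient of fc
  have hgc : Continuous (fun y => gradient fc y) := by
    have : LipschitzWith (Real.toNNReal L) (fun y => gradient fc y) := by
      apply LipschitzWith.of_dist_le_mul
      intro a bb
      simpa [dist_eq_norm, Real.coe_toNNReal L hL.le] using hLip a bb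
    exact this.continuous
  -- notation
  set g : ℕ → Ω → EuclideanSpace ℝ (Fin p) := fun k ω => gradient fc (θ k ω) with hgdef
  have hgSM : ∀ k, StronglyMeasurable[ℱ k] (g k) :=
    fun k => hgc.comp_stronglyMeasurable (hθmeas k)
  set G : ℕ → ℝ := fun k => ∫ ω, ‖g k ω‖ ^ 2 ∂μ with hGdef
  set Fv : ℕ → ℝ := fun k => ∫ ω, fc (θ k ω) ∂μ with hFdef
  have hGnonneg : ∀ k, 0 ≤ G k := fun k =>
    integral_nonneg (fun ω => by positivity)
  -- integrability of ‖g k‖²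
  have hIg : ∀ k, Integrable (fun ω => ‖g k ω‖ ^ 2) μ := by
    intro k
    apply Integrable.mono' ((integrable_const (2 * ‖gradient fc 0‖ ^ 2)).add
      ((hθsq k).const_mul (2 * L ^ 2)))
    · exact (((hgSM k).mono (ℱ.le k)).norm.pow 2).aestronglyMeasurable
    · filter_upwards with ω
      have h1 : ‖g k ω - gradient fc 0‖ ≤ L * ‖θ k ω‖ := by
        simpa using hLip (θ k ω) 0
      have h2 : ‖g k ω‖ ≤ ‖gradient fc 0‖ + L * ‖θ k ω‖ := by
        have := norm_sub_norm_le (g k ω) (gradient fc 0)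
        linarith
      have h3 : (0:ℝ) ≤ ‖g k ω‖ ^ 2 := by positivity
      calc ‖‖g k ω‖ ^ 2‖ = ‖g k ω‖ ^ 2 := by rw [Real.norm_eq_abs, abs_of_nonneg h3]
        _ ≤ 2 * ‖gradient fc 0‖ ^ 2 + 2 * L ^ 2 * ‖θ k ω‖ ^ 2 := by
            nlinarith [mul_self_le_mul_self (norm_nonneg (g k ω)) h2,
              sq_nonneg (‖gradient fc 0‖ - L * ‖θ k ω‖),
              norm_nonneg (g k ω), norm_nonneg (θ k ω), norm_nonneg (gradient fc 0),
              mul_nonneg hL.le (norm_nonneg (θ k ω))]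
  -- integrability of ‖bk k‖²
  have hIb : ∀ k, Integrable (fun ω => ‖bk k ω‖ ^ 2) μ := by
    intro k
    apply Integrable.mono' (integrable_const ((2 * b / c) ^ 2))
    · exact (((hbmeas k).mono (ℱ.le k)).norm.pow 2).aestronglyMeasurable
    · filter_upwards [hbbd k] with ω hω
      have h3 : (0:ℝ) ≤ ‖bk k ω‖ ^ 2 := by positivity
      rw [Real.norm_eq_abs, abs_of_nonneg h3]
      exact pow_le_pow_left₀ (norm_nonneg _) hω 2
  -- integrability of ‖g k + bk k‖²
  have hIgb : ∀ k, Integrable (fun ω => ‖g k ω + bk k ω‖ ^ 2) μ := by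
    intro k
    apply Integrable.mono' (((hIg k).const_mul 2).add ((hIb k).const_mul 2))
    · exact ((((hgSM k).add (hbmeas k)).mono (ℱ.le k)).norm.pow 2).aestronglyMeasurable
    · filter_upwards with ω
      have h3 : (0:ℝ) ≤ ‖g k ω + bk k ω‖ ^ 2 := by positivity
      simp only [Pi.add_apply]
      rw [Real.norm_eq_abs, abs_of_nonneg h3]
      have h4 := norm_add_le (g k ω) (bk k ω)
      nlinarith [mul_self_le_mul_self (norm_nonneg (g k ω + bk k ω)) h4,
        norm_nonneg (g k ω), norm_nonneg (bk k ω),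
        sq_nonneg (‖g k ω‖ - ‖bk k ω‖)]
  -- E‖r k‖² ≤ σ²
  have hR2 : ∀ k, ∫ ω, ‖r k ω‖ ^ 2 ∂μ ≤ σ ^ 2 := by
    intro k
    have h1 : ∫ ω, ‖r k ω‖ ^ 2 ∂μ
        = ∫ ω, (μ[fun ω' => ‖r k ω'‖ ^ 2|ℱ k]) ω ∂μ :=
      (integral_condExp (f := fun ω' => ‖r k ω'‖ ^ 2) (ℱ.le k)).symm
    rw [h1]
    calc ∫ ω, (μ[fun ω' => ‖r k ω'‖ ^ 2|ℱ k]) ω ∂μ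
        ≤ ∫ _ω, σ ^ 2 ∂μ := integral_mono_ae integrable_condExp (integrable_const _) (hrvar k)
      _ = σ ^ 2 := by simp
  -- one-step descent in expectation
  have key : ∀ k, Fv (k + 1) ≤ Fv k - η / 4 * G k
      + (2 * η * b ^ 2 / c ^ 2 + L * η ^ 2 / 2 * (σ ^ 2 + 8 * b ^ 2 / c ^ 2)) := by
    intro k
    -- pointwise descent inequality
    have hpt : ∀ ω, fc (θ (k + 1) ω) ≤ fc (θ k ω)
        - η * (‖g k ω‖ ^ 2 + ⟪g k ω, r k ω⟫_ℝ + ⟪g k ω, bk k ω⟫_ℝ)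
        + L * η ^ 2 / 2 * (‖g k ω + bk k ω‖ ^ 2
            + 2 * ⟪g k ω + bk k ω, r k ω⟫_ℝ + ‖r k ω‖ ^ 2) := by
      intro ω
      set w := g k ω + r k ω + bk k ω with hwdef
      have hrec' : θ (k + 1) ω = θ k ω + (-η) • w := by
        rw [hrec k ω]
        simp only [hwdef, hgdef, neg_smul, sub_eq_add_neg]
      have hdes := descent_lemma_aux hL hfc hLip (θ k ω) ((-η) • w)
      rw [← hrec'] at hdes
      have e1 : ⟪g k ω, (-η) • w⟫_ℝ = -η * ⟪g k ω, w⟫_ℝ := real_inner_smul_right _ _ _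
      have e2 : ‖(-η) • w‖ ^ 2 = η ^ 2 * ‖w‖ ^ 2 := by
        rw [norm_smul]
        simp [Real.norm_eq_abs, abs_of_pos hη]
        ring
      have e3 : ⟪g k ω, w⟫_ℝ
          = ‖g k ω‖ ^ 2 + ⟪g k ω, r k ω⟫_ℝ + ⟪g k ω, bk k ω⟫_ℝ := by
        rw [hwdef, inner_add_right, inner_add_right, real_inner_self_eq_norm_sq]
      have e4 : ‖w‖ ^ 2 = ‖g k ω + bk k ω‖ ^ 2
          + 2 * ⟪g k ω + bk k ω, r k ω⟫_ℝ + ‖r k ω‖ ^ 2 := by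
        rw [show w = (g k ω + bk k ω) + r k ω from by rw [hwdef]; abel]
        exact norm_add_sq_real _ _
      rw [e1, e2, e3, e4] at hdes
      calc fc (θ (k + 1) ω)
          ≤ fc (θ k ω) + (-η * (‖g k ω‖ ^ 2 + ⟪g k ω, r k ω⟫_ℝ + ⟪g k ω, bk k ω⟫_ℝ))
            + L / 2 * (η ^ 2 * (‖g k ω + bk k ω‖ ^ 2
              + 2 * ⟪g k ω + bk k ω, r k ω⟫_ℝ + ‖r k ω‖ ^ 2)) := hdes
        _ = fc (θ k ω)
            - η * (‖g k ω‖ ^ 2 + ⟪g k ω, r k ω⟫_ℝ + ⟪g k ω, bk k ω⟫_ℝ)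
            + L * η ^ 2 / 2 * (‖g k ω + bk k ω‖ ^ 2
              + 2 * ⟪g k ω + bk k ω, r k ω⟫_ℝ + ‖r k ω‖ ^ 2) := by ring
    -- integrability of the pieces
    have hgAE : AEStronglyMeasurable (g k) μ := ((hgSM k).mono (ℱ.le k)).aestronglyMeasurable
    have hbAE : AEStronglyMeasurable (bk k) μ := ((hbmeas k).mono (ℱ.le k)).aestronglyMeasurable
    have hgbAE : AEStronglyMeasurable (fun ω => g k ω + bk k ω) μ := hgAE.add hbAE
    have hrAE : AEStronglyMeasurable (r k) μ := (hrint k).aestronglyMeasurable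
    have hIB : Integrable (fun ω => ⟪g k ω, r k ω⟫_ℝ) μ :=
      integrable_inner_of_sq hgAE hrAE (hIg k) (hrsq k)
    have hIC : Integrable (fun ω => ⟪g k ω, bk k ω⟫_ℝ) μ :=
      integrable_inner_of_sq hgAE hbAE (hIg k) (hIb k)
    have hIE : Integrable (fun ω => ⟪g k ω + bk k ω, r k ω⟫_ℝ) μ :=
      integrable_inner_of_sq hgbAE hrAE (hIgb k) (hrsq k)
    -- zero expectations
    have hB0 : ∫ ω, ⟪g k ω, r k ω⟫_ℝ ∂μ = 0 :=
      integral_inner_zero_aux (ℱ.le k) (hgSM k) (hIg k) (hrint k) (hrsq k) (hrcond k)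
    have hE0 : ∫ ω, ⟪g k ω + bk k ω, r k ω⟫_ℝ ∂μ = 0 :=
      integral_inner_zero_aux (ℱ.le k) ((hgSM k).add (hbmeas k)) (hIgb k) (hrint k)
        (hrsq k) (hrcond k)
    -- bound on the bias inner product
    have hCbd : -(G k / 2 + 2 * b ^ 2 / c ^ 2) ≤ ∫ ω, ⟪g k ω, bk k ω⟫_ℝ ∂μ := by
      have hpt' : ∀ᵐ ω ∂μ, -(‖g k ω‖ ^ 2 / 2 + 2 * b ^ 2 / c ^ 2) ≤ ⟪g k ω, bk k ω⟫_ℝ := by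
        filter_upwards [hbbd k] with ω hω
        have h1 := abs_real_inner_le_norm (g k ω) (bk k ω)
        have h2 : ‖g k ω‖ * ‖bk k ω‖ ≤ ‖g k ω‖ * (2 * b / c) :=
          mul_le_mul_of_nonneg_left hω (norm_nonneg _)
        have h3 : ‖g k ω‖ * (2 * b / c)
            ≤ ‖g k ω‖ ^ 2 / 2 + 2 * b ^ 2 / c ^ 2 := by
          have hsq := sq_nonneg (‖g k ω‖ - 2 * b / c)
          have hx : (‖g k ω‖ - 2 * b / c) ^ 2
              = ‖g k ω‖ ^ 2 - 2 * (‖g k ω‖ * (2 * b / c)) + 4 * (b ^ 2 / c ^ 2) := by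
            field_simp
            ring
          rw [hx] at hsq
          have h2c : 2 * b ^ 2 / c ^ 2 = 2 * (b ^ 2 / c ^ 2) := by ring
          rw [h2c]
          linarith
        have h4 : |⟪g k ω, bk k ω⟫_ℝ| ≤ ‖g k ω‖ ^ 2 / 2 + 2 * b ^ 2 / c ^ 2 :=
          h1.trans (h2.trans h3)
        linarith [neg_abs_le (⟪g k ω, bk k ω⟫_ℝ)]
      have := integral_mono_ae (((hIg k).div_const 2).add
        (integrable_const (2 * b ^ 2 / c ^ 2))).neg hIC hpt'
      calc -(G k / 2 + 2 * b ^ 2 / c ^ 2)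
          = ∫ ω, -(‖g k ω‖ ^ 2 / 2 + 2 * b ^ 2 / c ^ 2) ∂μ := by
            rw [integral_neg, integral_add ((hIg k).div_const 2) (integrable_const _),
              integral_div]
            simp [hGdef]
        _ ≤ ∫ ω, ⟪g k ω, bk k ω⟫_ℝ ∂μ := this
    -- bound on ∫ ‖g+b‖²
    have hDbd : ∫ ω, ‖g k ω + bk k ω‖ ^ 2 ∂μ ≤ 2 * G k + 8 * b ^ 2 / c ^ 2 := by
      have hpt' : ∀ᵐ ω ∂μ, ‖g k ω + bk k ω‖ ^ 2
          ≤ 2 * ‖g k ω‖ ^ 2 + 8 * b ^ 2 / c ^ 2 := by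
        filter_upwards [hbbd k] with ω hω
        have h1 := norm_add_le (g k ω) (bk k ω)
        have hb0 := norm_nonneg (bk k ω)
        have hg0 := norm_nonneg (g k ω)
        have h2 : ‖bk k ω‖ ^ 2 ≤ (2 * b / c) ^ 2 := pow_le_pow_left₀ hb0 hω 2
        have h3 : (2 * b / c) ^ 2 = 4 * (b ^ 2 / c ^ 2) := by
          field_simp
          ring
        have h8c : 8 * b ^ 2 / c ^ 2 = 8 * (b ^ 2 / c ^ 2) := by ring
        rw [h8c]
        nlinarith [pow_le_pow_left₀ (norm_nonneg (g k ω + bk k ω)) h1 2,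
          sq_nonneg (‖g k ω‖ - ‖bk k ω‖), h2, h3]
      have := integral_mono_ae (hIgb k)
        (((hIg k).const_mul 2).add (integrable_const (8 * b ^ 2 / c ^ 2))) hpt'
      calc ∫ ω, ‖g k ω + bk k ω‖ ^ 2 ∂μ
          ≤ ∫ ω, (2 * ‖g k ω‖ ^ 2 + 8 * b ^ 2 / c ^ 2) ∂μ := this
        _ = 2 * G k + 8 * b ^ 2 / c ^ 2 := by
            rw [integral_add ((hIg k).const_mul 2) (integrable_const _),
              integral_const_mul]
            simp [hGdef]
    -- integrate the pointwise inequality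
    have hRHSint : Integrable (fun ω => fc (θ k ω)
        - η * (‖g k ω‖ ^ 2 + ⟪g k ω, r k ω⟫_ℝ + ⟪g k ω, bk k ω⟫_ℝ)
        + L * η ^ 2 / 2 * (‖g k ω + bk k ω‖ ^ 2
            + 2 * ⟪g k ω + bk k ω, r k ω⟫_ℝ + ‖r k ω‖ ^ 2)) μ := by
      apply Integrable.add
      · exact (hfcint k).sub ((((hIg k).add hIB).add hIC).const_mul η)
      · exact ((((hIgb k).add (hIE.const_mul 2)).add (hrsq k)).const_mul (L * η ^ 2 / 2))
    have hstep := integral_mono_ae (hfcint (k + 1)) hRHSint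
      (Filter.Eventually.of_forall hpt)
    have hI1 : Integrable (fun ω => ‖g k ω‖ ^ 2 + ⟪g k ω, r k ω⟫_ℝ
        + ⟪g k ω, bk k ω⟫_ℝ) μ := ((hIg k).add hIB).add hIC
    have hI2 : Integrable (fun ω => ‖g k ω + bk k ω‖ ^ 2
        + 2 * ⟪g k ω + bk k ω, r k ω⟫_ℝ + ‖r k ω‖ ^ 2) μ :=
      ((hIgb k).add (hIE.const_mul 2)).add (hrsq k)
    have s1 : ∫ ω, (fc (θ k ω)
        - η * (‖g k ω‖ ^ 2 + ⟪g k ω, r k ω⟫_ℝ + ⟪g k ω, bk k ω⟫_ℝ)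
        + L * η ^ 2 / 2 * (‖g k ω + bk k ω‖ ^ 2
            + 2 * ⟪g k ω + bk k ω, r k ω⟫_ℝ + ‖r k ω‖ ^ 2)) ∂μ
        = ∫ ω, (fc (θ k ω)
            - η * (‖g k ω‖ ^ 2 + ⟪g k ω, r k ω⟫_ℝ + ⟪g k ω, bk k ω⟫_ℝ)) ∂μ
          + ∫ ω, L * η ^ 2 / 2 * (‖g k ω + bk k ω‖ ^ 2
            + 2 * ⟪g k ω + bk k ω, r k ω⟫_ℝ + ‖r k ω‖ ^ 2) ∂μ :=
      integral_add ((hfcint k).sub (hI1.const_mul η)) (hI2.const_mul _)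
    have s2 : ∫ ω, (fc (θ k ω)
            - η * (‖g k ω‖ ^ 2 + ⟪g k ω, r k ω⟫_ℝ + ⟪g k ω, bk k ω⟫_ℝ)) ∂μ
        = ∫ ω, fc (θ k ω) ∂μ
          - ∫ ω, η * (‖g k ω‖ ^ 2 + ⟪g k ω, r k ω⟫_ℝ + ⟪g k ω, bk k ω⟫_ℝ) ∂μ :=
      integral_sub (hfcint k) (hI1.const_mul η)
    have s3 : ∫ ω, η * (‖g k ω‖ ^ 2 + ⟪g k ω, r k ω⟫_ℝ + ⟪g k ω, bk k ω⟫_ℝ) ∂μ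
        = η * ∫ ω, (‖g k ω‖ ^ 2 + ⟪g k ω, r k ω⟫_ℝ + ⟪g k ω, bk k ω⟫_ℝ) ∂μ :=
      integral_const_mul η _
    have s4 : ∫ ω, (‖g k ω‖ ^ 2 + ⟪g k ω, r k ω⟫_ℝ + ⟪g k ω, bk k ω⟫_ℝ) ∂μ
        = (∫ ω, (‖g k ω‖ ^ 2 + ⟪g k ω, r k ω⟫_ℝ) ∂μ)
          + ∫ ω, ⟪g k ω, bk k ω⟫_ℝ ∂μ :=
      integral_add ((hIg k).add hIB) hIC
    have s5 : ∫ ω, (‖g k ω‖ ^ 2 + ⟪g k ω, r k ω⟫_ℝ) ∂μ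
        = (∫ ω, ‖g k ω‖ ^ 2 ∂μ) + ∫ ω, ⟪g k ω, r k ω⟫_ℝ ∂μ :=
      integral_add (hIg k) hIB
    have s6 : ∫ ω, L * η ^ 2 / 2 * (‖g k ω + bk k ω‖ ^ 2
            + 2 * ⟪g k ω + bk k ω, r k ω⟫_ℝ + ‖r k ω‖ ^ 2) ∂μ
        = L * η ^ 2 / 2 * ∫ ω, (‖g k ω + bk k ω‖ ^ 2
            + 2 * ⟪g k ω + bk k ω, r k ω⟫_ℝ + ‖r k ω‖ ^ 2) ∂μ :=
      integral_const_mul _ _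
    have s7 : ∫ ω, (‖g k ω + bk k ω‖ ^ 2
            + 2 * ⟪g k ω + bk k ω, r k ω⟫_ℝ + ‖r k ω‖ ^ 2) ∂μ
        = (∫ ω, (‖g k ω + bk k ω‖ ^ 2 + 2 * ⟪g k ω + bk k ω, r k ω⟫_ℝ) ∂μ)
          + ∫ ω, ‖r k ω‖ ^ 2 ∂μ :=
      integral_add ((hIgb k).add (hIE.const_mul 2)) (hrsq k)
    have s8 : ∫ ω, (‖g k ω + bk k ω‖ ^ 2 + 2 * ⟪g k ω + bk k ω, r k ω⟫_ℝ) ∂μ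
        = (∫ ω, ‖g k ω + bk k ω‖ ^ 2 ∂μ)
          + ∫ ω, 2 * ⟪g k ω + bk k ω, r k ω⟫_ℝ ∂μ :=
      integral_add (hIgb k) (hIE.const_mul 2)
    have s9 : ∫ ω, 2 * ⟪g k ω + bk k ω, r k ω⟫_ℝ ∂μ
        = 2 * ∫ ω, ⟪g k ω + bk k ω, r k ω⟫_ℝ ∂μ := integral_const_mul 2 _
    have hsplit : ∫ ω, (fc (θ k ω)
        - η * (‖g k ω‖ ^ 2 + ⟪g k ω, r k ω⟫_ℝ + ⟪g k ω, bk k ω⟫_ℝ)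
        + L * η ^ 2 / 2 * (‖g k ω + bk k ω‖ ^ 2
            + 2 * ⟪g k ω + bk k ω, r k ω⟫_ℝ + ‖r k ω‖ ^ 2)) ∂μ
        = Fv k - η * (G k + (∫ ω, ⟪g k ω, bk k ω⟫_ℝ ∂μ))
          + L * η ^ 2 / 2 * ((∫ ω, ‖g k ω + bk k ω‖ ^ 2 ∂μ) + (∫ ω, ‖r k ω‖ ^ 2 ∂μ)) := by
      rw [s1, s2, s3, s4, s5, s6, s7, s8, s9, hB0, hE0]
      simp only [hGdef, hFdef]
      ring
    rw [hsplit] at hstep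
    -- combine the bounds
    have hC := hCbd
    have hD := hDbd
    have hRR := hR2 k
    have hGk := hGnonneg k
    have hLη2 : (0:ℝ) ≤ L * η ^ 2 / 2 := by positivity
    have e2 : -(η * (∫ ω, ⟪g k ω, bk k ω⟫_ℝ ∂μ))
        ≤ η * G k / 2 + 2 * η * b ^ 2 / c ^ 2 := by
      have e := mul_le_mul_of_nonneg_left hC hη.le
      have q : η * (-(G k / 2 + 2 * b ^ 2 / c ^ 2))
          = -(η * G k / 2 + 2 * η * b ^ 2 / c ^ 2) := by ring
      rw [q] at e
      linarith
    have e3 : L * η ^ 2 / 2 * ((∫ ω, ‖g k ω + bk k ω‖ ^ 2 ∂μ) + (∫ ω, ‖r k ω‖ ^ 2 ∂μ))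
        ≤ L * η ^ 2 * G k + 4 * L * η ^ 2 * b ^ 2 / c ^ 2 + L * η ^ 2 / 2 * σ ^ 2 := by
      have e := mul_le_mul_of_nonneg_left
        (show (∫ ω, ‖g k ω + bk k ω‖ ^ 2 ∂μ) + (∫ ω, ‖r k ω‖ ^ 2 ∂μ)
          ≤ 2 * G k + 8 * b ^ 2 / c ^ 2 + σ ^ 2 from by linarith) hLη2
      have q : L * η ^ 2 / 2 * (2 * G k + 8 * b ^ 2 / c ^ 2 + σ ^ 2)
          = L * η ^ 2 * G k + 4 * L * η ^ 2 * b ^ 2 / c ^ 2 + L * η ^ 2 / 2 * σ ^ 2 := by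
        ring
      rw [q] at e
      exact e
    have e4 : L * η ^ 2 * G k ≤ η / 4 * G k := by
      have h1 : L * η ^ 2 = (L * η) * η := by ring
      have h2 : (L * η) * η ≤ (1 / 4) * η := mul_le_mul_of_nonneg_right hLη hη.le
      have h3 : (L * η) * η * G k ≤ (1 / 4) * η * G k :=
        mul_le_mul_of_nonneg_right h2 hGk
      rw [h1]
      linarith
    have q1 : η * (G k + (∫ ω, ⟪g k ω, bk k ω⟫_ℝ ∂μ))
        = η * G k + η * (∫ ω, ⟪g k ω, bk k ω⟫_ℝ ∂μ) := by ring
    have qg : L * η ^ 2 / 2 * (σ ^ 2 + 8 * b ^ 2 / c ^ 2)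
        = 4 * L * η ^ 2 * b ^ 2 / c ^ 2 + L * η ^ 2 / 2 * σ ^ 2 := by ring
    rw [q1] at hstep
    linarith [hstep, e2, e3, e4, qg]
  -- telescoping sum
  set Cst : ℝ := 2 * η * b ^ 2 / c ^ 2 + L * η ^ 2 / 2 * (σ ^ 2 + 8 * b ^ 2 / c ^ 2)
    with hCstdef
  have hsum : η / 4 * (∑ k ∈ Finset.range K, G k)
      ≤ fc θ0 - fcstar + K * Cst := by
    have h1 : ∑ k ∈ Finset.range K, (η / 4 * G k)
        ≤ ∑ k ∈ Finset.range K, (Fv k - Fv (k + 1) + Cst) := by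
      apply Finset.sum_le_sum
      intro k _
      have := key k
      linarith
    have h2 : ∑ k ∈ Finset.range K, (Fv k - Fv (k + 1) + Cst)
        = (Fv 0 - Fv K) + K * Cst := by
      rw [Finset.sum_add_distrib, Finset.sum_range_sub' Fv K]
      simp [mul_comm]
    have h3 : Fv 0 = fc θ0 := by
      rw [hFdef]
      simp only
      rw [show (fun ω => fc (θ 0 ω)) = fun _ω => fc θ0 from funext fun ω => by rw [hθ0 ω]]
      simp
    have h4 : fcstar ≤ Fv K := by
      rw [hFdef]
      calc fcstar = ∫ _ω, fcstar ∂μ := by simp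
        _ ≤ ∫ ω, fc (θ K ω) ∂μ := integral_mono_ae (integrable_const _) (hfcint K)
            (Filter.Eventually.of_forall fun ω => hfclb _)
    rw [Finset.mul_sum]
    calc ∑ k ∈ Finset.range K, (η / 4 * G k)
        ≤ (Fv 0 - Fv K) + K * Cst := h1.trans h2.le
      _ ≤ fc θ0 - fcstar + K * Cst := by linarith
  -- choose the minimizing index
  obtain ⟨k0, hk0mem, hk0min⟩ := Finset.exists_min_image (Finset.range K) G
    ⟨0, Finset.mem_range.mpr (by omega)⟩
  refine ⟨k0, Finset.mem_range.mp hk0mem, ?_⟩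
  have hKG : (K : ℝ) * G k0 ≤ ∑ k ∈ Finset.range K, G k := by
    have := Finset.card_nsmul_le_sum (Finset.range K) G (G k0) (fun i hi => hk0min i hi)
    simpa [Finset.card_range, nsmul_eq_mul] using this
  -- bound on G k0
  have hGk0 : G k0 ≤ 4 * (fc θ0 - fcstar) / (α * s) + 8 * b ^ 2 / c ^ 2
      + 2 * L * α * (σ ^ 2 + 8 * b ^ 2 / c ^ 2) / s := by
    have hK0 : (0:ℝ) < K := by exact_mod_cast hK
    have h1 : η / 4 * ((K : ℝ) * G k0) ≤ η / 4 * (∑ k ∈ Finset.range K, G k) :=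
      mul_le_mul_of_nonneg_left hKG (by positivity)
    have h2 : η / 4 * ((K : ℝ) * G k0) ≤ fc θ0 - fcstar + K * Cst := h1.trans hsum
    have hηK : η * (K : ℝ) = α * s := by
      rw [hηdef, div_mul_eq_mul_div, div_eq_iff hs0.ne']
      nlinarith [hss]
    -- expand Cst
    have hCstval : (K : ℝ) * Cst
        = (α * s) * (2 * b ^ 2 / c ^ 2) + (α * s) * (L * η / 2 * (σ ^ 2 + 8 * b ^ 2 / c ^ 2)) := by
      rw [hCstdef]
      have : (K : ℝ) * (2 * η * b ^ 2 / c ^ 2) = (α * s) * (2 * b ^ 2 / c ^ 2) := by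
        rw [← hηK]; ring
      have h5 : (K : ℝ) * (L * η ^ 2 / 2 * (σ ^ 2 + 8 * b ^ 2 / c ^ 2))
          = (α * s) * (L * η / 2 * (σ ^ 2 + 8 * b ^ 2 / c ^ 2)) := by
        rw [← hηK]; ring
      calc (K : ℝ) * (2 * η * b ^ 2 / c ^ 2 + L * η ^ 2 / 2 * (σ ^ 2 + 8 * b ^ 2 / c ^ 2))
          = (K : ℝ) * (2 * η * b ^ 2 / c ^ 2)
            + (K : ℝ) * (L * η ^ 2 / 2 * (σ ^ 2 + 8 * b ^ 2 / c ^ 2)) := by ring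
        _ = _ := by rw [this, h5]
    have hαs : (0:ℝ) < α * s := by positivity
    -- divide through
    have h6 : (α * s) / 4 * G k0 ≤ fc θ0 - fcstar
        + (α * s) * (2 * b ^ 2 / c ^ 2) + (α * s) * (L * η / 2 * (σ ^ 2 + 8 * b ^ 2 / c ^ 2)) := by
      have : η / 4 * ((K : ℝ) * G k0) = (η * K) / 4 * G k0 := by ring
      rw [this, hηK] at h2
      linarith [hCstval, h2]
    have h7 : G k0 ≤ (fc θ0 - fcstar
        + (α * s) * (2 * b ^ 2 / c ^ 2)
        + (α * s) * (L * η / 2 * (σ ^ 2 + 8 * b ^ 2 / c ^ 2))) * 4 / (α * s) := by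
      rw [le_div_iff₀ hαs]
      have q : G k0 * (α * s) = 4 * ((α * s) / 4 * G k0) := by ring
      rw [q]
      linarith [h6]
    refine h7.trans_eq ?_
    rw [hηdef]
    field_simp
    ring
  -- final bound using the smoothing relation
  by_cases hIf : Integrable (fun ω => ‖gradient f (θ k0 ω)‖ ^ 2) μ
  · have hptf : ∀ᵐ ω ∂μ, ‖gradient f (θ k0 ω)‖ ^ 2
        ≤ 2 * ‖g k0 ω‖ ^ 2 + (c ^ 2 / 2) * L * ((p : ℝ) + 3) ^ 3 :=
      Filter.Eventually.of_forall fun ω => hsmooth (θ k0 ω)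
    have h8 : ∫ ω, ‖gradient f (θ k0 ω)‖ ^ 2 ∂μ
        ≤ 2 * G k0 + (c ^ 2 / 2) * L * ((p : ℝ) + 3) ^ 3 := by
      calc ∫ ω, ‖gradient f (θ k0 ω)‖ ^ 2 ∂μ
          ≤ ∫ ω, (2 * ‖g k0 ω‖ ^ 2 + (c ^ 2 / 2) * L * ((p : ℝ) + 3) ^ 3) ∂μ :=
            integral_mono_ae hIf (((hIg k0).const_mul 2).add (integrable_const _)) hptf
        _ = 2 * G k0 + (c ^ 2 / 2) * L * ((p : ℝ) + 3) ^ 3 := by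
            rw [integral_add ((hIg k0).const_mul 2) (integrable_const _), integral_const_mul]
            simp [hGdef]
    have h9 : 2 * G k0 ≤ 8 * (fc θ0 - fcstar) / (α * s) + 16 * b ^ 2 / c ^ 2
        + 4 * L * α * (σ ^ 2 + 8 * b ^ 2 / c ^ 2) / s := by
      have h := mul_le_mul_of_nonneg_left hGk0 (by norm_num : (0:ℝ) ≤ 2)
      calc 2 * G k0
          ≤ 2 * (4 * (fc θ0 - fcstar) / (α * s) + 8 * b ^ 2 / c ^ 2
            + 2 * L * α * (σ ^ 2 + 8 * b ^ 2 / c ^ 2) / s) := h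
        _ = 8 * (fc θ0 - fcstar) / (α * s) + 16 * b ^ 2 / c ^ 2
            + 4 * L * α * (σ ^ 2 + 8 * b ^ 2 / c ^ 2) / s := by ring
    linarith [h8, h9]
  · rw [integral_undef hIf]
    have h1 : 0 ≤ fc θ0 - fcstar := by linarith [hfclb θ0]
    have h2 : (0:ℝ) ≤ 8 * (fc θ0 - fcstar) / (α * s) := by positivity
    have h3 : (0:ℝ) ≤ 4 * L * α * (σ ^ 2 + 8 * b ^ 2 / c ^ 2) / s := by positivity
    have h4 : (0:ℝ) ≤ 16 * b ^ 2 / c ^ 2 := by positivity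
    have h5 : (0:ℝ) ≤ (c ^ 2 / 2) * L * ((p : ℝ) + 3) ^ 3 := by positivity
    linarith
end

section
/- Let p be a positive natural number, E := EuclideanSpace ℝ (Fin p), and let (Ω, 𝒜, μ) be a probability space with a filtration (ℱ_k)_{k∈ℕ}. Let L, σ, c, b > 0, let f_c : E → ℝ be differentiable with L-Lipschitz gradient and bounded below by f*_c ∈ ℝ, let f : E → ℝ be differentiable, and assume ‖∇f(θ)‖² ≤ 2·‖∇f_c(θ)‖² + (c²/2)·L·(p+3)³ for all θ ∈ E. Let γ ∈ (1/2, 1], 0 < α ≤ 1/(4·L), and set α_k := α/(k+1)^γ. Suppose random sequences θ_k, r_k, b_k : Ω → E satisfy: θ_0 deterministic; θ_{k+1} = θ_k − α_k • (∇f_c(θ_k) + r_k + b_k); θ_k and b_k are ℱ_k-measurable; r_k is ℱ_{k+1}-measurable, integrable with square-integrable norm; E[r_k | ℱ_k] = 0 a.s.; E[‖r_k‖² | ℱ_k] ≤ σ² a.s.; ‖b_k‖ ≤ 2·b/c a.s.; and each θ_k has square-integrable norm with f_c(θ_k) integrable. Then for every K ≥ 1, writing S_K := Σ_{k=0}^{K−1}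 α_k and Q_K := Σ_{k=0}^{K−1} α_k², the stepsize-weighted average of the expected squared gradient norms satisfies (1/S_K)·Σ_{k=0}^{K−1} α_k·E[‖∇f(θ_k)‖²] ≤ 8·(f_c(θ_0) − f*_c)/S_K + 4·L·(σ² + 8·b²/c²)·Q_K/S_K + 16·b²/c² + (c²/2)·L·(p+3)³. -/
open MeasureTheory
open scoped RealInnerProductSpace

set_option maxHeartbeats 1000000

section Aux

lemma my_descent {E : Type*} [NormedAddCommGroup E] [InnerProductSpace ℝ E] [CompleteSpace E]
    (fc : E → ℝ) (L : ℝ) (hfc : Differentiable ℝ fc)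
    (hLip : ∀ x y, ‖gradient fc x - gradient fc y‖ ≤ L * ‖x - y‖) (x v : E) :
    fc (x + v) ≤ fc x + ⟪gradient fc x, v⟫ + L / 2 * ‖v‖ ^ 2 := by
  set A : ℝ := ⟪gradient fc x, v⟫ with hA
  set B : ℝ := L / 2 * ‖v‖ ^ 2 with hB
  set ψ : ℝ → ℝ := fun t => fc (x + t • v) - t * A - B * t ^ 2 with hψdef
  have hψ : ∀ t : ℝ, HasDerivAt ψ (⟪gradient fc (x + t • v), v⟫ - A - B * (2 * t)) t := by
    intro t
    have hline : HasDerivAt (fun t : ℝ => x + t • v) v t := by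
      simpa using ((hasDerivAt_id t).smul_const v).const_add x
    have hfd : HasFDerivAt fc ((InnerProductSpace.toDual ℝ E) (gradient fc (x + t • v)))
        (x + t • v) := hasGradientAt_iff_hasFDerivAt.mp (hfc _).hasGradientAt
    have h1 : HasDerivAt (fun t : ℝ => fc (x + t • v)) ⟪gradient fc (x + t • v), v⟫ t := by
      have h := hfd.comp_hasDerivAt t hline
      rw [InnerProductSpace.toDual_apply_apply] at h
      exact h
    have h2 : HasDerivAt (fun t : ℝ => t * A) A t := hasDerivAt_mul_const A
    have h3 : HasDerivAt (fun t : ℝ => B * t ^ 2) (B * (2 * t)) t := by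
      simpa using ((hasDerivAt_pow 2 t).const_mul B)
    exact (h1.sub h2).sub h3
  have hanti : AntitoneOn ψ (Set.Icc (0 : ℝ) 1) := by
    apply antitoneOn_of_deriv_nonpos (convex_Icc 0 1)
    · exact (continuous_iff_continuousAt.mpr fun t =>
        (hψ t).differentiableAt.continuousAt).continuousOn
    · exact fun t _ => (hψ t).differentiableAt.differentiableWithinAt
    · intro t ht
      rw [interior_Icc, Set.mem_Ioo] at ht
      rw [(hψ t).deriv]
      have hcs : ⟪gradient fc (x + t • v) - gradient fc x, v⟫
          ≤ ‖gradient fc (x + t • v) - gradient fc x‖ * ‖v‖ := real_inner_le_norm _ _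
      have hlip := hLip (x + t • v) x
      have hnorm : ‖x + t • v - x‖ = t * ‖v‖ := by
        rw [add_sub_cancel_left, norm_smul, Real.norm_eq_abs, abs_of_pos ht.1]
      rw [hnorm] at hlip
      rw [inner_sub_left] at hcs
      have hvnn : (0:ℝ) ≤ ‖v‖ := norm_nonneg v
      nlinarith [ht.1.le, norm_nonneg (gradient fc (x + t • v) - gradient fc x)]
  have h01 := hanti (Set.mem_Icc.mpr ⟨le_refl 0, zero_le_one⟩)
    (Set.mem_Icc.mpr ⟨zero_le_one, le_refl 1⟩) zero_le_one
  have hψ0 : ψ 0 = fc x := by simp [hψdef]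
  have hψ1 : ψ 1 = fc (x + v) - A - B := by simp [hψdef]
  rw [hψ0, hψ1] at h01
  linarith

lemma my_integrable_inner {Ω : Type*} {mΩ : MeasurableSpace Ω} {μ : Measure Ω}
    {F : Type*} [NormedAddCommGroup F] [InnerProductSpace ℝ F]
    {f g : Ω → F} (hf : MemLp f 2 μ) (hg : MemLp g 2 μ) :
    Integrable (fun ω => ⟪f ω, g ω⟫) μ := by
  have h := MeasureTheory.L2.integrable_inner (𝕜 := ℝ) (hf.toLp f) (hg.toLp g)
  refine h.congr ?_
  filter_upwards [hf.coeFn_toLp, hg.coeFn_toLp] with ω h1 h2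
  rw [h1, h2]

lemma my_condexp_coord {Ω : Type*} {p : ℕ} {m mΩ : MeasurableSpace Ω} (hm : m ≤ mΩ)
    {μ : Measure Ω} [IsProbabilityMeasure μ] {r : Ω → EuclideanSpace ℝ (Fin p)}
    (hri : Integrable r μ) (hrc : μ[r|m] =ᵐ[μ] 0) (i : Fin p) :
    μ[fun ω => r ω i|m] =ᵐ[μ] 0 := by
  have hri' : Integrable (fun ω => r ω i) μ := by
    simpa using (EuclideanSpace.proj (𝕜 := ℝ) i).integrable_comp hri
  refine (ae_eq_condExp_of_forall_setIntegral_eq hm hri' (g := fun _ => 0)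
    (fun s _ _ => integrableOn_zero) ?_ ?_).symm
  · intro s hs hμs
    have hint : ∫ ω in s, r ω ∂μ = 0 := by
      have h1 : ∫ ω in s, r ω ∂μ = ∫ ω in s, (μ[r|m]) ω ∂μ :=
        (setIntegral_condExp hm hri hs).symm
      rw [h1, setIntegral_congr_ae (hm s hs) (hrc.mono fun ω hω _ => hω)]
      simp
    have h2 : ∫ ω in s, r ω i ∂μ = (EuclideanSpace.proj (𝕜 := ℝ) i) (∫ ω in s, r ω ∂μ) := by
      rw [← ContinuousLinearMap.integral_comp_comm _ hri.integrableOn]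
      simp
    rw [h2, hint]
    simp
  · exact aestronglyMeasurable_const

lemma my_integral_inner_zero {Ω : Type*} {p : ℕ} {m mΩ : MeasurableSpace Ω} (hm : m ≤ mΩ)
    {μ : Measure Ω} [IsProbabilityMeasure μ] {X r : Ω → EuclideanSpace ℝ (Fin p)}
    (hXm : StronglyMeasurable[m] X) (hX2 : MemLp X 2 μ) (hr2 : MemLp r 2 μ)
    (hri : Integrable r μ) (hrc : μ[r|m] =ᵐ[μ] 0) :
    ∫ ω, ⟪X ω, r ω⟫ ∂μ = 0 := by
  have hprod : ∀ i : Fin p, Integrable (fun ω => X ω i * r ω i) μ := by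
    intro i
    have hXi : MemLp (fun ω => X ω i) 2 μ := by
      simpa [Function.comp_def] using (EuclideanSpace.proj (𝕜 := ℝ) i).comp_memLp' hX2
    have hri2 : MemLp (fun ω => r ω i) 2 μ := by
      simpa [Function.comp_def] using (EuclideanSpace.proj (𝕜 := ℝ) i).comp_memLp' hr2
    have := my_integrable_inner (F := ℝ) hXi hri2
    simpa [RCLike.inner_apply, mul_comm] using this
  have hzero : ∀ i : Fin p, ∫ ω, X ω i * r ω i ∂μ = 0 := by
    intro i
    have hXim : StronglyMeasurable[m] (fun ω => X ω i) :=
      (EuclideanSpace.proj (𝕜 := ℝ) i).continuous.comp_stronglyMeasurable hXm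
    have hric : μ[fun ω => r ω i|m] =ᵐ[μ] 0 := my_condexp_coord hm hri hrc i
    have hri' : Integrable (fun ω => r ω i) μ := by
      simpa using (EuclideanSpace.proj (𝕜 := ℝ) i).integrable_comp hri
    have hmul := condExp_mul_of_stronglyMeasurable_left (μ := μ) hXim
      (hprod i) hri'
    have hz : μ[(fun ω => X ω i) * (fun ω => r ω i)|m] =ᵐ[μ] 0 := by
      refine hmul.trans ?_
      filter_upwards [hric] with ω hω
      simp only [Pi.mul_apply, hω]
      simp
    calc ∫ ω, X ω i * r ω i ∂μ
        = ∫ ω, (μ[(fun ω => X ω i) * (fun ω => r ω i)|m]) ω ∂μ := by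
          rw [integral_condExp hm]; rfl
      _ = 0 := by rw [integral_congr_ae hz]; simp
  have hinner : ∀ ω, ⟪X ω, r ω⟫ = ∑ i, X ω i * r ω i := by
    intro ω
    simp [PiLp.inner_apply, RCLike.inner_apply, mul_comm]
  simp_rw [hinner]
  rw [integral_finset_sum _ (fun i _ => hprod i)]
  exact Finset.sum_eq_zero fun i _ => hzero i

end Aux

/-- diminishing-stepsize convergence guarantee for the two-point function
approximation with biased function evaluations. With `α_k = α/(k+1)^γ`, `γ ∈ (1/2,1]`,
`0 < α ≤ 1/(4L)`, gradient-estimate bias bounded by `2b/c` a.s., and conditionally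
mean-zero noise with conditional variance at most `σ²`, the stepsize-weighted average
of `E‖∇f(θ_k)‖²` is at most
`8(f_c(θ_0) − f*_c)/S_K + 4L(σ² + 8b²/c²)·Q_K/S_K + 16b²/c² + (c²/2)L(p+3)³`. -/
theorem biased_two_point_diminishing_stepsize
    (p : ℕ) (hp : 0 < p)
    {Ω : Type*} {mΩ : MeasurableSpace Ω} {μ : Measure Ω} [IsProbabilityMeasure μ]
    (ℱ : Filtration ℕ mΩ)
    (L σ c b : ℝ) (hL : 0 < L) (hσ : 0 < σ) (hc : 0 < c) (hb : 0 < b)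
    (fc f : EuclideanSpace ℝ (Fin p) → ℝ) (fcstar : ℝ)
    (hfc : Differentiable ℝ fc)
    (hLip : ∀ x y, ‖gradient fc x - gradient fc y‖ ≤ L * ‖x - y‖)
    (hfclb : ∀ x, fcstar ≤ fc x)
    (hf : Differentiable ℝ f)
    (hsmooth : ∀ x, ‖gradient f x‖ ^ 2
      ≤ 2 * ‖gradient fc x‖ ^ 2 + (c ^ 2 / 2) * L * ((p : ℝ) + 3) ^ 3)
    (γ : ℝ) (hγ : γ ∈ Set.Ioc (1 / 2 : ℝ) 1)
    (α : ℝ) (hα : 0 < α) (hαL : α ≤ 1 / (4 * L))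
    (αk : ℕ → ℝ) (hαk : ∀ k, αk k = α / ((k : ℝ) + 1) ^ γ)
    (θ r bk : ℕ → Ω → EuclideanSpace ℝ (Fin p))
    (θ0 : EuclideanSpace ℝ (Fin p)) (hθ0 : ∀ ω, θ 0 ω = θ0)
    (hrec : ∀ k ω, θ (k + 1) ω = θ k ω
      - αk k • (gradient fc (θ k ω) + r k ω + bk k ω))
    (hθmeas : ∀ k, StronglyMeasurable[ℱ k] (θ k))
    (hbmeas : ∀ k, StronglyMeasurable[ℱ k] (bk k))
    (hrmeas : ∀ k, StronglyMeasurable[ℱ (k + 1)] (r k))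
    (hrint : ∀ k, Integrable (r k) μ)
    (hrsq : ∀ k, Integrable (fun ω => ‖r k ω‖ ^ 2) μ)
    (hrcond : ∀ k, μ[r k|ℱ k] =ᵐ[μ] 0)
    (hrvar : ∀ k, ∀ᵐ ω ∂μ, (μ[fun ω' => ‖r k ω'‖ ^ 2|ℱ k]) ω ≤ σ ^ 2)
    (hbbd : ∀ k, ∀ᵐ ω ∂μ, ‖bk k ω‖ ≤ 2 * b / c)
    (hθsq : ∀ k, Integrable (fun ω => ‖θ k ω‖ ^ 2) μ)
    (hfcint : ∀ k, Integrable (fun ω => fc (θ k ω)) μ)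
    (K : ℕ) (hK : 1 ≤ K) :
    (1 / ∑ k ∈ Finset.range K, αk k) *
        ∑ k ∈ Finset.range K, αk k * ∫ ω, ‖gradient f (θ k ω)‖ ^ 2 ∂μ
      ≤ 8 * (fc θ0 - fcstar) / (∑ k ∈ Finset.range K, αk k)
        + 4 * L * (σ ^ 2 + 8 * b ^ 2 / c ^ 2)
          * (∑ k ∈ Finset.range K, (αk k) ^ 2) / (∑ k ∈ Finset.range K, αk k)
        + 16 * b ^ 2 / c ^ 2 + (c ^ 2 / 2) * L * ((p : ℝ) + 3) ^ 3 := by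
  -- basic stepsize facts
  have hαpos : ∀ k, 0 < αk k := by
    intro k
    rw [hαk k]
    have h1 : (0:ℝ) < ((k : ℝ) + 1) ^ γ :=
      Real.rpow_pos_of_pos (by positivity) γ
    positivity
  have hαle : ∀ k, αk k ≤ α := by
    intro k
    rw [hαk k]
    have h1 : (1:ℝ) ≤ ((k : ℝ) + 1) ^ γ := by
      apply Real.one_le_rpow (by push_cast; linarith [Nat.cast_nonneg (α := ℝ) k])
      linarith [hγ.1]
    calc α / ((k : ℝ) + 1) ^ γ ≤ α / 1 := by
          apply div_le_div_of_nonneg_left hα.le one_pos h1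
      _ = α := div_one α
  have hLαk : ∀ k, L * αk k ≤ 1 / 4 := by
    intro k
    have h1 : L * αk k ≤ L * α := by
      exact mul_le_mul_of_nonneg_left (hαle k) hL.le
    have h2 : L * α ≤ L * (1 / (4 * L)) := mul_le_mul_of_nonneg_left hαL hL.le
    have h3 : L * (1 / (4 * L)) = 1 / 4 := by field_simp
    linarith
  -- notation
  set g : ℕ → Ω → EuclideanSpace ℝ (Fin p) := fun k ω => gradient fc (θ k ω) with hgdef
  set β : ℝ := 2 * b / c with hβdef
  have hβpos : 0 < β := by positivity
  have hβsq : β ^ 2 = 4 * b ^ 2 / c ^ 2 := by rw [hβdef, div_pow]; ring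
  -- continuity of gradient
  have hgcont : Continuous (gradient fc) := by
    have : LipschitzWith (Real.toNNReal L) (gradient fc) := by
      apply LipschitzWith.of_dist_le_mul
      intro x y
      rw [dist_eq_norm, dist_eq_norm, Real.coe_toNNReal L hL.le]
      exact hLip x y
    exact this.continuous
  -- measurability and L2 facts
  have hgm : ∀ k, StronglyMeasurable[ℱ k] (g k) := fun k =>
    hgcont.comp_stronglyMeasurable (hθmeas k)
  have hθaesm : ∀ k, AEStronglyMeasurable (θ k) μ := fun k =>
    ((hθmeas k).mono (ℱ.le k)).aestronglyMeasurable
  have hgaesm : ∀ k, AEStronglyMeasurable (g k) μ := fun k =>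
    ((hgm k).mono (ℱ.le k)).aestronglyMeasurable
  have hθ2 : ∀ k, MemLp (θ k) 2 μ := fun k =>
    (memLp_two_iff_integrable_sq_norm (hθaesm k)).mpr (hθsq k)
  have hg2 : ∀ k, MemLp (g k) 2 μ := by
    intro k
    have hbound2 : MemLp (fun ω => ‖gradient fc 0‖ + L * ‖θ k ω‖) 2 μ :=
      (memLp_const (μ := μ) (p := 2) ‖gradient fc 0‖).add ((hθ2 k).norm.const_mul L)
    refine hbound2.of_le (hgaesm k) (ae_of_all _ fun ω => ?_)
    have h1 : ‖g k ω‖ ≤ ‖gradient fc 0‖ + L * ‖θ k ω‖ := by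
      have h2 := hLip (θ k ω) 0
      simp only [sub_zero] at h2
      calc ‖g k ω‖ = ‖(gradient fc (θ k ω) - gradient fc 0) + gradient fc 0‖ := by
            simp [hgdef]
        _ ≤ ‖gradient fc (θ k ω) - gradient fc 0‖ + ‖gradient fc 0‖ := norm_add_le _ _
        _ ≤ ‖gradient fc 0‖ + L * ‖θ k ω‖ := by linarith
    have h2 : ‖gradient fc 0‖ + L * ‖θ k ω‖ ≤ ‖‖gradient fc 0‖ + L * ‖θ k ω‖‖ := by
      rw [Real.norm_eq_abs]; exact le_abs_self _
    exact h1.trans h2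
  have hb2 : ∀ k, MemLp (bk k) 2 μ := fun k =>
    MemLp.of_bound ((hbmeas k).mono (ℱ.le k)).aestronglyMeasurable β (hbbd k)
  have hr2 : ∀ k, MemLp (r k) 2 μ := fun k =>
    (memLp_two_iff_integrable_sq_norm
      ((hrmeas k).mono (ℱ.le (k+1))).aestronglyMeasurable).mpr (hrsq k)
  have hgsq : ∀ k, Integrable (fun ω => ‖g k ω‖ ^ 2) μ := fun k =>
    (memLp_two_iff_integrable_sq_norm (hgaesm k)).mp (hg2 k)
  -- the integral quantities
  set G : ℕ → ℝ := fun k => ∫ ω, ‖g k ω‖ ^ 2 ∂μ with hGdef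
  set I : ℕ → ℝ := fun k => ∫ ω, fc (θ k ω) ∂μ with hIdef
  have hGnn : ∀ k, 0 ≤ G k := fun k => integral_nonneg fun ω => by positivity
  -- per-step inequality
  have hstep : ∀ k, I (k+1) ≤ I k - αk k / 2 * G k + αk k * (4 * b ^ 2 / c ^ 2)
      + L * (αk k) ^ 2 / 2 * (σ ^ 2 + 8 * b ^ 2 / c ^ 2) := by
    intro k
    set X : Ω → EuclideanSpace ℝ (Fin p) := fun ω => g k ω + bk k ω with hXdef
    have hXm : StronglyMeasurable[ℱ k] X := (hgm k).add (hbmeas k)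
    have hX2 : MemLp X 2 μ := (hg2 k).add (hb2 k)
    have hXsq : Integrable (fun ω => ‖X ω‖ ^ 2) μ :=
      (memLp_two_iff_integrable_sq_norm ((hXm.mono (ℱ.le k)).aestronglyMeasurable)).mp hX2
    have hgr : Integrable (fun ω => ⟪g k ω, r k ω⟫) μ := my_integrable_inner (hg2 k) (hr2 k)
    have hXr : Integrable (fun ω => ⟪X ω, r k ω⟫) μ := my_integrable_inner hX2 (hr2 k)
    have hgb : Integrable (fun ω => ⟪g k ω, bk k ω⟫) μ := my_integrable_inner (hg2 k) (hb2 k)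
    have hEgr : ∫ ω, ⟪g k ω, r k ω⟫ ∂μ = 0 :=
      my_integral_inner_zero (ℱ.le k) (hgm k) (hg2 k) (hr2 k) (hrint k) (hrcond k)
    have hEXr : ∫ ω, ⟪X ω, r k ω⟫ ∂μ = 0 :=
      my_integral_inner_zero (ℱ.le k) hXm hX2 (hr2 k) (hrint k) (hrcond k)
    have hR : ∫ ω, ‖r k ω‖ ^ 2 ∂μ ≤ σ ^ 2 := by
      have h1 : ∫ ω, ‖r k ω‖ ^ 2 ∂μ
          = ∫ ω, (μ[fun ω' => ‖r k ω'‖ ^ 2|ℱ k]) ω ∂μ := (integral_condExp (ℱ.le k)).symm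
      rw [h1]
      calc ∫ ω, (μ[fun ω' => ‖r k ω'‖ ^ 2|ℱ k]) ω ∂μ ≤ ∫ _ω, σ ^ 2 ∂μ :=
            integral_mono_ae integrable_condExp (integrable_const _) (hrvar k)
        _ = σ ^ 2 := by simp
    have hIB : - ∫ ω, ⟪g k ω, bk k ω⟫ ∂μ ≤ 1 / 4 * G k + 4 * b ^ 2 / c ^ 2 := by
      have h1 : ∫ ω, -⟪g k ω, bk k ω⟫ ∂μ
          ≤ ∫ ω, (1 / 4 * ‖g k ω‖ ^ 2 + 4 * b ^ 2 / c ^ 2) ∂μ := by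
        refine integral_mono_ae hgb.neg (((hgsq k).const_mul (1/4)).add (integrable_const _)) ?_
        filter_upwards [hbbd k] with ω hω
        have h2 : |⟪g k ω, bk k ω⟫| ≤ ‖g k ω‖ * ‖bk k ω‖ := abs_real_inner_le_norm _ _
        have h3 : 0 ≤ ‖g k ω‖ := norm_nonneg _
        have h4 : 0 ≤ ‖bk k ω‖ := norm_nonneg _
        have h5 : ‖g k ω‖ * ‖bk k ω‖ ≤ 1/4 * ‖g k ω‖ ^ 2 + β ^ 2 := by
          nlinarith [sq_nonneg (‖g k ω‖ / 2 - ‖bk k ω‖), sq_nonneg (‖g k ω‖/2 - β)]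
        rw [← hβsq]
        linarith [neg_abs_le (⟪g k ω, bk k ω⟫)]
      rw [integral_neg] at h1
      rw [integral_add ((hgsq k).const_mul (1/4)) (integrable_const _),
        integral_const_mul, integral_const] at h1
      simpa [hGdef] using h1
    have hIX : ∫ ω, ‖X ω‖ ^ 2 ∂μ ≤ 2 * G k + 8 * b ^ 2 / c ^ 2 := by
      have h1 : ∫ ω, ‖X ω‖ ^ 2 ∂μ ≤ ∫ ω, (2 * ‖g k ω‖ ^ 2 + 8 * b ^ 2 / c ^ 2) ∂μ := by
        refine integral_mono_ae hXsq (((hgsq k).const_mul 2).add (integrable_const _)) ?_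
        filter_upwards [hbbd k] with ω hω
        have h2 : ‖X ω‖ ≤ ‖g k ω‖ + ‖bk k ω‖ := norm_add_le _ _
        have h4 : 0 ≤ ‖bk k ω‖ := norm_nonneg _
        have h5 : ‖X ω‖ ^ 2 ≤ 2 * ‖g k ω‖ ^ 2 + 2 * β ^ 2 := by
          nlinarith [sq_nonneg (‖g k ω‖ - ‖bk k ω‖), norm_nonneg (X ω), norm_nonneg (g k ω)]
        have h6 : 2 * β ^ 2 = 8 * b ^ 2 / c ^ 2 := by rw [hβsq]; ring
        linarith
      rw [integral_add ((hgsq k).const_mul 2) (integrable_const _),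
        integral_const_mul, integral_const] at h1
      simpa [hGdef] using h1
    -- pointwise descent
    have hdesc : ∀ ω, fc (θ (k+1) ω) ≤ fc (θ k ω)
        - αk k * (‖g k ω‖ ^ 2 + ⟪g k ω, r k ω⟫ + ⟪g k ω, bk k ω⟫)
        + L * (αk k) ^ 2 / 2 * (‖X ω‖ ^ 2 + 2 * ⟪X ω, r k ω⟫ + ‖r k ω‖ ^ 2) := by
      intro ω
      set d : EuclideanSpace ℝ (Fin p) := gradient fc (θ k ω) + r k ω + bk k ω with hddef
      have hθ' : θ (k+1) ω = θ k ω + (-(αk k • d)) := by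
        rw [hrec k ω, sub_eq_add_neg]
      have hmain := my_descent fc L hfc hLip (θ k ω) (-(αk k • d))
      rw [← hθ'] at hmain
      have hinner : ⟪gradient fc (θ k ω), -(αk k • d)⟫
          = -(αk k * ⟪g k ω, d⟫) := by
        rw [inner_neg_right, real_inner_smul_right]
      have hnorm : ‖-(αk k • d)‖ ^ 2 = (αk k) ^ 2 * ‖d‖ ^ 2 := by
        rw [norm_neg, norm_smul, Real.norm_eq_abs, abs_of_pos (hαpos k), mul_pow]
      have hgd : ⟪g k ω, d⟫ = ‖g k ω‖ ^ 2 + ⟪g k ω, r k ω⟫ + ⟪g k ω, bk k ω⟫ := by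
        rw [hddef, inner_add_right, inner_add_right, real_inner_self_eq_norm_sq]
      have hdX : d = X ω + r k ω := by
        rw [hddef, hXdef]
        simp only [hgdef]
        abel
      have hdsq : ‖d‖ ^ 2 = ‖X ω‖ ^ 2 + 2 * ⟪X ω, r k ω⟫ + ‖r k ω‖ ^ 2 := by
        rw [hdX, norm_add_sq_real]
      rw [hinner, hnorm, hgd, hdsq] at hmain
      calc fc (θ (k+1) ω) ≤ fc (θ k ω)
            + -(αk k * (‖g k ω‖ ^ 2 + ⟪g k ω, r k ω⟫ + ⟪g k ω, bk k ω⟫))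
            + L / 2 * ((αk k) ^ 2 * (‖X ω‖ ^ 2 + 2 * ⟪X ω, r k ω⟫ + ‖r k ω‖ ^ 2)) := hmain
        _ = fc (θ k ω) - αk k * (‖g k ω‖ ^ 2 + ⟪g k ω, r k ω⟫ + ⟪g k ω, bk k ω⟫)
            + L * (αk k) ^ 2 / 2 * (‖X ω‖ ^ 2 + 2 * ⟪X ω, r k ω⟫ + ‖r k ω‖ ^ 2) := by ring
    -- integrate
    have hRHSint1 : Integrable (fun ω =>
        ‖g k ω‖ ^ 2 + ⟪g k ω, r k ω⟫ + ⟪g k ω, bk k ω⟫) μ := ((hgsq k).add hgr).add hgb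
    have hRHSint2 : Integrable (fun ω =>
        ‖X ω‖ ^ 2 + 2 * ⟪X ω, r k ω⟫ + ‖r k ω‖ ^ 2) μ :=
      (hXsq.add (hXr.const_mul 2)).add (hrsq k)
    have hRHSint : Integrable (fun ω => fc (θ k ω)
        - αk k * (‖g k ω‖ ^ 2 + ⟪g k ω, r k ω⟫ + ⟪g k ω, bk k ω⟫)
        + L * (αk k) ^ 2 / 2 * (‖X ω‖ ^ 2 + 2 * ⟪X ω, r k ω⟫ + ‖r k ω‖ ^ 2)) μ :=
      ((hfcint k).sub (hRHSint1.const_mul _)).add (hRHSint2.const_mul _)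
    have hint : I (k+1) ≤ ∫ ω, (fc (θ k ω)
        - αk k * (‖g k ω‖ ^ 2 + ⟪g k ω, r k ω⟫ + ⟪g k ω, bk k ω⟫)
        + L * (αk k) ^ 2 / 2 * (‖X ω‖ ^ 2 + 2 * ⟪X ω, r k ω⟫ + ‖r k ω‖ ^ 2)) ∂μ :=
      integral_mono (hfcint (k+1)) hRHSint hdesc
    have hIc : Integrable (fun ω => αk k * (‖g k ω‖ ^ 2 + ⟪g k ω, r k ω⟫ + ⟪g k ω, bk k ω⟫)) μ :=
      hRHSint1.const_mul _
    have hId : Integrable (fun ω => L * (αk k) ^ 2 / 2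
        * (‖X ω‖ ^ 2 + 2 * ⟪X ω, r k ω⟫ + ‖r k ω‖ ^ 2)) μ := hRHSint2.const_mul _
    have hIa : Integrable (fun ω => fc (θ k ω)
        - αk k * (‖g k ω‖ ^ 2 + ⟪g k ω, r k ω⟫ + ⟪g k ω, bk k ω⟫)) μ := (hfcint k).sub hIc
    have hIBval : ∫ ω, (fc (θ k ω)
        - αk k * (‖g k ω‖ ^ 2 + ⟪g k ω, r k ω⟫ + ⟪g k ω, bk k ω⟫)
        + L * (αk k) ^ 2 / 2 * (‖X ω‖ ^ 2 + 2 * ⟪X ω, r k ω⟫ + ‖r k ω‖ ^ 2)) ∂μ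
        = I k - αk k * (G k + (∫ ω, ⟪g k ω, bk k ω⟫ ∂μ))
          + L * (αk k) ^ 2 / 2 * ((∫ ω, ‖X ω‖ ^ 2 ∂μ) + ∫ ω, ‖r k ω‖ ^ 2 ∂μ) := by
      have e1 : ∫ ω, (fc (θ k ω)
          - αk k * (‖g k ω‖ ^ 2 + ⟪g k ω, r k ω⟫ + ⟪g k ω, bk k ω⟫)
          + L * (αk k) ^ 2 / 2 * (‖X ω‖ ^ 2 + 2 * ⟪X ω, r k ω⟫ + ‖r k ω‖ ^ 2)) ∂μ
          = (∫ ω, (fc (θ k ω)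
            - αk k * (‖g k ω‖ ^ 2 + ⟪g k ω, r k ω⟫ + ⟪g k ω, bk k ω⟫)) ∂μ)
          + ∫ ω, (L * (αk k) ^ 2 / 2
            * (‖X ω‖ ^ 2 + 2 * ⟪X ω, r k ω⟫ + ‖r k ω‖ ^ 2)) ∂μ := integral_add hIa hId
      have e2 : ∫ ω, (fc (θ k ω)
          - αk k * (‖g k ω‖ ^ 2 + ⟪g k ω, r k ω⟫ + ⟪g k ω, bk k ω⟫)) ∂μ
          = I k - ∫ ω, (αk k * (‖g k ω‖ ^ 2 + ⟪g k ω, r k ω⟫ + ⟪g k ω, bk k ω⟫)) ∂μ :=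
        integral_sub (hfcint k) hIc
      have e3 : ∫ ω, (αk k * (‖g k ω‖ ^ 2 + ⟪g k ω, r k ω⟫ + ⟪g k ω, bk k ω⟫)) ∂μ
          = αk k * ∫ ω, (‖g k ω‖ ^ 2 + ⟪g k ω, r k ω⟫ + ⟪g k ω, bk k ω⟫) ∂μ :=
        integral_const_mul _ _
      have e4 : ∫ ω, (‖g k ω‖ ^ 2 + ⟪g k ω, r k ω⟫ + ⟪g k ω, bk k ω⟫) ∂μ
          = G k + (∫ ω, ⟪g k ω, bk k ω⟫ ∂μ) := by
        have i1 : Integrable (fun ω => ‖g k ω‖ ^ 2 + ⟪g k ω, r k ω⟫) μ := (hgsq k).add hgr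
        rw [integral_add i1 hgb, integral_add (hgsq k) hgr, hEgr]
        simp [hGdef]
      have e5 : ∫ ω, (L * (αk k) ^ 2 / 2
          * (‖X ω‖ ^ 2 + 2 * ⟪X ω, r k ω⟫ + ‖r k ω‖ ^ 2)) ∂μ
          = L * (αk k) ^ 2 / 2
            * ∫ ω, (‖X ω‖ ^ 2 + 2 * ⟪X ω, r k ω⟫ + ‖r k ω‖ ^ 2) ∂μ := integral_const_mul _ _
      have e6 : ∫ ω, (‖X ω‖ ^ 2 + 2 * ⟪X ω, r k ω⟫ + ‖r k ω‖ ^ 2) ∂μ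
          = (∫ ω, ‖X ω‖ ^ 2 ∂μ) + ∫ ω, ‖r k ω‖ ^ 2 ∂μ := by
        have i2 : Integrable (fun ω => ‖X ω‖ ^ 2 + 2 * ⟪X ω, r k ω⟫) μ :=
          hXsq.add (hXr.const_mul 2)
        rw [integral_add i2 (hrsq k), integral_add hXsq (hXr.const_mul 2),
          integral_const_mul, hEXr]
        ring
      rw [e1, e2, e3, e4, e5, e6]
    rw [hIBval] at hint
    -- combine estimates
    have hq : 0 ≤ L * (αk k) ^ 2 / 2 := by positivity
    have hαknn := (hαpos k).le
    have hm2 : L * (αk k) ^ 2 / 2 * (∫ ω, ‖X ω‖ ^ 2 ∂μ)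
        ≤ L * (αk k) ^ 2 / 2 * (2 * G k + 8 * b ^ 2 / c ^ 2) :=
      mul_le_mul_of_nonneg_left hIX hq
    have hm3 : L * (αk k) ^ 2 / 2 * (∫ ω, ‖r k ω‖ ^ 2 ∂μ)
        ≤ L * (αk k) ^ 2 / 2 * σ ^ 2 := mul_le_mul_of_nonneg_left hR hq
    have hm1 : αk k * (- ∫ ω, ⟪g k ω, bk k ω⟫ ∂μ)
        ≤ αk k * (1 / 4 * G k + 4 * b ^ 2 / c ^ 2) := mul_le_mul_of_nonneg_left hIB hαknn
    have hm4 : L * (αk k) ^ 2 * G k ≤ αk k / 4 * G k := by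
      have : L * (αk k) ^ 2 * G k = (L * αk k) * (αk k * G k) := by ring
      rw [this]
      have h5 : 0 ≤ αk k * G k := mul_nonneg hαknn (hGnn k)
      calc (L * αk k) * (αk k * G k) ≤ 1 / 4 * (αk k * G k) :=
            mul_le_mul_of_nonneg_right (hLαk k) h5
        _ = αk k / 4 * G k := by ring
    simp only [div_eq_mul_inv] at hint hm1 hm2 hm3 hm4 ⊢
    nlinarith [hint, hm1, hm2, hm3, hm4]
  -- telescoping
  have hmain : ∀ n : ℕ, I n + ∑ k ∈ Finset.range n, (αk k / 2 * G k)
      ≤ I 0 + ∑ k ∈ Finset.range n,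
        (αk k * (4 * b ^ 2 / c ^ 2) + L * (αk k) ^ 2 / 2 * (σ ^ 2 + 8 * b ^ 2 / c ^ 2)) := by
    intro n
    induction n with
    | zero => simp
    | succ n ih =>
      rw [Finset.sum_range_succ, Finset.sum_range_succ]
      have h := hstep n
      simp only [div_eq_mul_inv] at h ih ⊢
      linarith
  have hI0 : I 0 = fc θ0 := by
    rw [hIdef]
    simp only
    have : (fun ω => fc (θ 0 ω)) = fun _ => fc θ0 := by
      funext ω; rw [hθ0 ω]
    rw [this]
    simp
  have hIKlb : fcstar ≤ I K := by
    rw [hIdef]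
    calc fcstar = ∫ _ω, fcstar ∂μ := by simp
      _ ≤ ∫ ω, fc (θ K ω) ∂μ := integral_mono (integrable_const _) (hfcint K)
          fun ω => hfclb (θ K ω)
  set S : ℝ := ∑ k ∈ Finset.range K, αk k with hSdef
  set Q : ℝ := ∑ k ∈ Finset.range K, (αk k) ^ 2 with hQdef
  have hSpos : 0 < S := by
    rw [hSdef]
    apply Finset.sum_pos (fun k _ => hαpos k)
    exact Finset.nonempty_range_iff.mpr (by omega)
  have hQnn : 0 ≤ Q := Finset.sum_nonneg fun k _ => sq_nonneg _
  have hsumval : ∑ k ∈ Finset.range K,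
      (αk k * (4 * b ^ 2 / c ^ 2) + L * (αk k) ^ 2 / 2 * (σ ^ 2 + 8 * b ^ 2 / c ^ 2))
      = 4 * b ^ 2 / c ^ 2 * S + L / 2 * (σ ^ 2 + 8 * b ^ 2 / c ^ 2) * Q := by
    rw [Finset.sum_add_distrib, hSdef, hQdef, Finset.mul_sum, Finset.mul_sum]
    congr 1
    · exact Finset.sum_congr rfl fun k _ => by ring
    · exact Finset.sum_congr rfl fun k _ => by ring
  have hGsum : ∑ k ∈ Finset.range K, (αk k * G k)
      ≤ 2 * (fc θ0 - fcstar) + 8 * b ^ 2 / c ^ 2 * S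
        + L * (σ ^ 2 + 8 * b ^ 2 / c ^ 2) * Q := by
    have h1 := hmain K
    rw [hsumval, hI0] at h1
    have h2 : ∑ k ∈ Finset.range K, (αk k * G k)
        = 2 * ∑ k ∈ Finset.range K, (αk k / 2 * G k) := by
      rw [Finset.mul_sum]
      exact Finset.sum_congr rfl fun k _ => by ring
    rw [h2]
    simp only [div_eq_mul_inv] at h1 ⊢
    linarith
  -- bound on F
  set C : ℝ := (c ^ 2 / 2) * L * ((p : ℝ) + 3) ^ 3 with hCdef
  have hCnn : 0 ≤ C := by rw [hCdef]; positivity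
  have hF : ∀ k, ∫ ω, ‖gradient f (θ k ω)‖ ^ 2 ∂μ ≤ 2 * G k + C := by
    intro k
    have h1 : ∫ ω, ‖gradient f (θ k ω)‖ ^ 2 ∂μ
        ≤ ∫ ω, (2 * ‖g k ω‖ ^ 2 + C) ∂μ := by
      apply integral_mono_of_nonneg (ae_of_all _ fun ω => by positivity)
        (((hgsq k).const_mul 2).add (integrable_const _))
      exact ae_of_all _ fun ω => hsmooth (θ k ω)
    rw [integral_add ((hgsq k).const_mul 2) (integrable_const _), integral_const_mul,
      integral_const] at h1
    simpa [hGdef] using h1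
  have hAsum : ∑ k ∈ Finset.range K, αk k * ∫ ω, ‖gradient f (θ k ω)‖ ^ 2 ∂μ
      ≤ 2 * ∑ k ∈ Finset.range K, (αk k * G k) + C * S := by
    calc ∑ k ∈ Finset.range K, αk k * ∫ ω, ‖gradient f (θ k ω)‖ ^ 2 ∂μ
        ≤ ∑ k ∈ Finset.range K, (αk k * (2 * G k + C)) :=
          Finset.sum_le_sum fun k _ =>
            mul_le_mul_of_nonneg_left (hF k) (hαpos k).le
      _ = 2 * ∑ k ∈ Finset.range K, (αk k * G k) + C * S := by
          rw [Finset.mul_sum, hSdef, Finset.mul_sum, ← Finset.sum_add_distrib]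
          exact Finset.sum_congr rfl fun k _ => by ring
  have hgap : 0 ≤ fc θ0 - fcstar := by linarith [hfclb θ0]
  have hCσnn : 0 ≤ σ ^ 2 + 8 * b ^ 2 / c ^ 2 := by positivity
  have hA : ∑ k ∈ Finset.range K, αk k * ∫ ω, ‖gradient f (θ k ω)‖ ^ 2 ∂μ
      ≤ 8 * (fc θ0 - fcstar) + 4 * L * (σ ^ 2 + 8 * b ^ 2 / c ^ 2) * Q
        + (16 * b ^ 2 / c ^ 2 + C) * S := by
    have h2 : 0 ≤ L * (σ ^ 2 + 8 * b ^ 2 / c ^ 2) * Q := by positivity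
    simp only [div_eq_mul_inv] at hAsum hGsum h2 ⊢
    nlinarith [hAsum, hGsum]
  -- final division
  have hfinal : (1 / S) * ∑ k ∈ Finset.range K, αk k * ∫ ω, ‖gradient f (θ k ω)‖ ^ 2 ∂μ
      ≤ 8 * (fc θ0 - fcstar) / S + 4 * L * (σ ^ 2 + 8 * b ^ 2 / c ^ 2) * Q / S
        + 16 * b ^ 2 / c ^ 2 + C := by
    have h1 : (1 / S) * ∑ k ∈ Finset.range K, αk k * ∫ ω, ‖gradient f (θ k ω)‖ ^ 2 ∂μ
        = (∑ k ∈ Finset.range K, αk k * ∫ ω, ‖gradient f (θ k ω)‖ ^ 2 ∂μ) / S := by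
      rw [one_div, inv_mul_eq_div]
    have h2 : 8 * (fc θ0 - fcstar) / S + 4 * L * (σ ^ 2 + 8 * b ^ 2 / c ^ 2) * Q / S
        + 16 * b ^ 2 / c ^ 2 + C
        = (8 * (fc θ0 - fcstar) + 4 * L * (σ ^ 2 + 8 * b ^ 2 / c ^ 2) * Q
          + (16 * b ^ 2 / c ^ 2 + C) * S) / S := by
      field_simp
      ring
    rw [h1, h2]
    gcongr
  exact hfinal
end
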